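/- For any positive semidefinite P, positive definite R, and matrices A, B of compatible dimensions, the Riccati update satisfies the completion-of-squares identity: for every gain K₀, Q + AᵀPA − AᵀPB(BᵀPB+R)⁻¹BᵀPA = Q + K*ᵀRK* + (A+BK*)ᵀP(A+BK*) ⪯ Q + K₀ᵀRK₀ + (A+BK₀)ᵀP(A+BK₀), where K* = −(BᵀPB+R)⁻¹BᵀPA. -/
import Mathlib


open Matrix

/-- Spectral radius of a real matrix: max modulus of its complex eigenvalues. -/
noncomputable def specRad {d : ℕ} (M : Matrix (Fin d) (Fin d) ℝ) : ENNReal :=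
  spectralRadius ℂ (M.map Complex.ofReal)

/-- Operator norm of a real matrix induced by Euclidean norms. -/
noncomputable def opNorm {d₁ d₂ : ℕ} (M : Matrix (Fin d₁) (Fin d₂) ℝ) : ℝ :=
  ‖LinearMap.toContinuousLinearMap (Matrix.toEuclideanLin M)‖

/-- Euclidean norm of a real vector. -/
noncomputable def enorm {n : ℕ} (v : Fin n → ℝ) : ℝ := Real.sqrt (∑ i, (v i)^2)

/-- Completion-of-squares identity for the Riccati update, and minimality of the Riccati gain. -/
theorem riccati_completion_of_squares {d du : ℕ}
    (A P Q : Matrix (Fin d) (Fin d) ℝ) (B : Matrix (Fin d) (Fin du) ℝ)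
    (R : Matrix (Fin du) (Fin du) ℝ)
    (hQ : Q.IsHermitian) (hR : R.PosDef) (hP : P.PosSemidef)
    (K : Matrix (Fin du) (Fin d) ℝ)
    (hK : K = -((Bᵀ * P * B + R)⁻¹ * (Bᵀ * P * A))) :
    Q + Aᵀ * P * A - Aᵀ * P * B * (Bᵀ * P * B + R)⁻¹ * (Bᵀ * P * A)
      = Q + Kᵀ * R * K + (A + B * K)ᵀ * P * (A + B * K) ∧
    ∀ K₀ : Matrix (Fin du) (Fin d) ℝ,
      (Q + K₀ᵀ * R * K₀ + (A + B * K₀)ᵀ * P * (A + B * K₀)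
        - (Q + Kᵀ * R * K + (A + B * K)ᵀ * P * (A + B * K))).PosSemidef := by
  set S : Matrix (Fin du) (Fin du) ℝ := Bᵀ * P * B + R with hSdef
  set M : Matrix (Fin du) (Fin d) ℝ := Bᵀ * P * A with hMdef
  set N : Matrix (Fin du) (Fin du) ℝ := S⁻¹ with hNdef
  -- P symmetric
  have hPt : Pᵀ = P := by
    have := hP.isHermitian
    rwa [Matrix.IsHermitian, conjTranspose_eq_transpose_of_trivial] at this
  -- S positive definite
  have hBPB : (Bᵀ * P * B).PosSemidef := by
    have := hP.conjTranspose_mul_mul_same B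
    rwa [conjTranspose_eq_transpose_of_trivial] at this
  have hS : S.PosDef := Matrix.PosDef.posSemidef_add hBPB hR
  have hSt : Sᵀ = S := by
    have := hS.isHermitian
    rwa [Matrix.IsHermitian, conjTranspose_eq_transpose_of_trivial] at this
  have hNt : Nᵀ = N := by
    have := hS.isHermitian.inv
    rwa [Matrix.IsHermitian, conjTranspose_eq_transpose_of_trivial] at this
  have hSN : S * N = 1 := Matrix.mul_nonsing_inv S ((Matrix.isUnit_iff_isUnit_det S).mp hS.isUnit)
  have hNS : N * S = 1 := Matrix.nonsing_inv_mul S ((Matrix.isUnit_iff_isUnit_det S).mp hS.isUnit)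
  -- key cancellations
  have hSNM : S * (N * M) = M := by rw [← Matrix.mul_assoc, hSN, Matrix.one_mul]
  have hMNS : Mᵀ * N * S = Mᵀ := by rw [Matrix.mul_assoc, hNS, Matrix.mul_one]
  -- transpose of K
  have hKt : Kᵀ = -(Mᵀ * N) := by
    rw [hK, transpose_neg, transpose_mul, hNt]
  -- AᵀPB = Mᵀ
  have hAPB : Aᵀ * P * B = Mᵀ := by
    rw [hMdef, transpose_mul, transpose_mul, transpose_transpose, hPt, Matrix.mul_assoc]
  -- central identity
  have hSNX : ∀ X : Matrix (Fin du) (Fin d) ℝ, S * (N * X) = X := fun X => by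
    rw [← Matrix.mul_assoc, hSN, Matrix.one_mul]
  have hNSX : ∀ X : Matrix (Fin du) (Fin d) ℝ, N * (S * X) = X := fun X => by
    rw [← Matrix.mul_assoc, hNS, Matrix.one_mul]
  have key : ∀ K₀ : Matrix (Fin du) (Fin d) ℝ,
      Q + K₀ᵀ * R * K₀ + (A + B * K₀)ᵀ * P * (A + B * K₀)
        = (Q + Aᵀ * P * A - Mᵀ * N * M) + (K₀ - K)ᵀ * S * (K₀ - K) := by
    intro K₀
    have h0 : K₀ - K = K₀ + N * M := by rw [hK, sub_neg_eq_add]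
    have h1 : (K₀ - K)ᵀ = K₀ᵀ + Mᵀ * N := by rw [transpose_sub, hKt, sub_neg_eq_add]
    rw [h1, h0]
    simp only [transpose_add, transpose_mul, transpose_transpose, hPt,
      Matrix.add_mul, Matrix.mul_add, Matrix.mul_assoc]
    simp only [hSNX, hNSX]
    simp only [hMdef, hSdef, Matrix.add_mul, Matrix.mul_add, Matrix.mul_assoc,
      transpose_mul, transpose_transpose, hPt]
    abel
  constructor
  · have h1 := key K
    simp only [sub_self, Matrix.zero_mul, Matrix.mul_zero, transpose_zero, add_zero] at h1
    rw [h1, hAPB, Matrix.mul_assoc]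
  · intro K₀
    rw [key K₀, key K]
    simp only [sub_self, Matrix.zero_mul, Matrix.mul_zero, transpose_zero, add_zero]
    have heq : (Q + Aᵀ * P * A - Mᵀ * N * M) + (K₀ - K)ᵀ * S * (K₀ - K)
        - (Q + Aᵀ * P * A - Mᵀ * N * M) = (K₀ - K)ᵀ * S * (K₀ - K) := by abel
    rw [heq]
    have := hS.posSemidef.conjTranspose_mul_mul_same (K₀ - K)
    rwa [conjTranspose_eq_transpose_of_trivial] at this
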